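/- Let $k$ be an algebraically closed field of characteristic zero and let $R_1,R_2$ be quadratic forms in $m$ variables over $k$ such that $\det(XR_1+YR_2)$ is a nonzero binary form with distinct linear factors over $k$. Then $(R_1,R_2)$ is a nonsingular system: for every nonzero $x\in k^m$ with $R_1(x)=R_2(x)=0$, the gradients $\nabla R_1(x)$ and $\nabla R_2(x)$ are linearly independent. -/

import Mathlib

open Matrix MvPolynomial

/-- The binary form `det (X·A₁ + Y·A₂)` attached to a pencil of quadratic forms,
as a polynomial in the two variables `X = X 0`, `Y = X 1`. -/
noncomputable def pencilDet {k : Type*} [CommRing k] {m : ℕ}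
    (A₁ A₂ : Matrix (Fin m) (Fin m) k) : MvPolynomial (Fin 2) k :=
  Matrix.det
    (((X (0 : Fin 2) : MvPolynomial (Fin 2) k) • A₁.map C
      + (X (1 : Fin 2) : MvPolynomial (Fin 2) k) • A₂.map C :
        Matrix (Fin m) (Fin m) (MvPolynomial (Fin 2) k)))

private lemma cramer_self_mulVec {R : Type*} [CommRing R] {m : ℕ}
    (N : Matrix (Fin m) (Fin m) R) (v : Fin m → R) :
    Matrix.cramer N (N *ᵥ v) = N.det • v := by
  rw [cramer_eq_adjugate_mulVec, mulVec_mulVec, adjugate_mul, smul_mulVec, one_mulVec]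

/-- Key linear-algebra lemma: if `N *ᵥ v = p • w`, `v ᵥ* N = p • w`, `v ⬝ᵥ w = 0`
and some entry of `v` is a unit, then `p * p ∣ det N`. -/
private lemma sq_dvd_det {R : Type*} [CommRing R] {m : ℕ}
    (N : Matrix (Fin m) (Fin m) R) (v w : Fin m → R) (p : R) (i : Fin m)
    (hv : IsUnit (v i)) (h1 : N *ᵥ v = p • w) (h2 : v ᵥ* N = p • w)
    (h0 : v ⬝ᵥ w = 0) : p * p ∣ N.det := by
  classical
  set N' := N.updateCol i w with hN'
  have c1 : N.det * v i = p * N'.det := by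
    have h := congrFun (cramer_self_mulVec N v) i
    rw [h1, _root_.map_smul] at h
    simpa [cramer_apply, smul_eq_mul, mul_comm] using h.symm
  have hrow : v ᵥ* N' = p • Function.update w i 0 := by
    funext j
    rcases eq_or_ne j i with rfl | hj
    · simp only [Matrix.vecMul, dotProduct, hN', Matrix.updateCol_apply, if_pos rfl,
        Pi.smul_apply, Function.update_self, smul_eq_mul, mul_zero]
      simpa [dotProduct] using h0
    · simp only [Matrix.vecMul, dotProduct, hN', Matrix.updateCol_apply, if_neg hj,
        Pi.smul_apply, Function.update_of_ne hj, smul_eq_mul]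
      have := congrFun h2 j
      simpa [Matrix.vecMul, dotProduct] using this
  have c2 : N'.det * v i = p * (N'ᵀ.updateCol i (Function.update w i 0)).det := by
    have h := congrFun (cramer_self_mulVec N'ᵀ v) i
    rw [Matrix.mulVec_transpose, hrow, _root_.map_smul] at h
    simpa [cramer_apply, smul_eq_mul, Matrix.det_transpose, mul_comm] using h.symm
  have key : N.det * (v i * v i) = p * p * (N'ᵀ.updateCol i (Function.update w i 0)).det := by
    calc N.det * (v i * v i) = (N.det * v i) * v i := by ring
    _ = p * (N'.det * v i) := by rw [c1]; ring
    _ = p * (p * (N'ᵀ.updateCol i (Function.update w i 0)).det) := by rw [c2]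
    _ = _ := by ring
  have hdvd : p * p ∣ N.det * (v i * v i) := ⟨_, key⟩
  obtain ⟨u, hu⟩ := hv.mul hv
  rw [← hu] at hdvd
  exact (Units.dvd_mul_right).mp hdvd

/-- Lemma 1 (converse part): if `det (X·R₁ + Y·R₂)` is a nonzero squarefree binary form,
then `(R₁, R₂)` is a nonsingular system: at every nonzero common zero the gradients
`A₁ *ᵥ x`, `A₂ *ᵥ x` are linearly independent. -/
theorem nonsingular_pair_of_det_pencil_squarefree
    {k : Type*} [Field k] [IsAlgClosed k] [CharZero k] {m : ℕ}
    (A₁ A₂ : Matrix (Fin m) (Fin m) k) (hA₁ : A₁.IsSymm) (hA₂ : A₂.IsSymm)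
    (hne : pencilDet A₁ A₂ ≠ 0) (hsf : Squarefree (pencilDet A₁ A₂)) :
    ∀ x : Fin m → k, x ≠ 0 → x ⬝ᵥ (A₁ *ᵥ x) = 0 → x ⬝ᵥ (A₂ *ᵥ x) = 0 →
      LinearIndependent k ![A₁ *ᵥ x, A₂ *ᵥ x] := by
  intro x hx hq1 hq2
  rw [LinearIndependent.pair_iff]
  by_contra hcon
  push_neg at hcon
  obtain ⟨s, t, hst, hst0⟩ := hcon
  obtain ⟨i, hxi⟩ : ∃ i, x i ≠ 0 := by
    by_contra h
    push_neg at h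
    exact hx (funext fun j => h j)
  set R := MvPolynomial (Fin 2) k with hR
  set N : Matrix (Fin m) (Fin m) R := (X (0 : Fin 2) : R) • A₁.map C + (X (1 : Fin 2) : R) • A₂.map C with hN
  have hdet : N.det = pencilDet A₁ A₂ := rfl
  set v : Fin m → R := fun j => C (x j) with hv
  have hNmv : ∀ (B : Matrix (Fin m) (Fin m) k), (B.map C) *ᵥ v = fun j => C ((B *ᵥ x) j) := by
    intro B
    funext j
    exact (RingHom.map_mulVec C B x j).symm
  have hmv : N *ᵥ v = fun j => X 0 * C ((A₁ *ᵥ x) j) + X 1 * C ((A₂ *ᵥ x) j) := by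
    funext j
    rw [hN, Matrix.add_mulVec, Matrix.smul_mulVec, Matrix.smul_mulVec,
      hNmv A₁, hNmv A₂]
    simp [smul_eq_mul]
  have hsymmN : Nᵀ = N := by
    rw [hN, Matrix.transpose_add, Matrix.transpose_smul, Matrix.transpose_smul,
      ← Matrix.transpose_map, ← Matrix.transpose_map, hA₁, hA₂]
  have hvm : v ᵥ* N = N *ᵥ v := by
    rw [← Matrix.mulVec_transpose, hsymmN]
  set p : R := C t * X 0 - C s * X 1 with hp
  have key : ∃ w : Fin m → R, N *ᵥ v = p • w ∧ v ⬝ᵥ w = 0 := by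
    rcases eq_or_ne t 0 with ht | ht
    · -- then s ≠ 0 and A₁ *ᵥ x = 0
      have hs : s ≠ 0 := by
        intro hs0
        exact hst0 hs0 ht
      have hinv : (C s : R) * C s⁻¹ = 1 := by
        rw [← C_mul, mul_inv_cancel₀ hs, C_1]
      refine ⟨fun j => C (-(s⁻¹ * (A₂ *ᵥ x) j)), ?_, ?_⟩
      · funext j
        have hj := congrFun hst j
        simp only [Pi.add_apply, Pi.smul_apply, Pi.zero_apply, smul_eq_mul, ht, zero_mul,
          add_zero] at hj
        have hu1 : (A₁ *ᵥ x) j = 0 := (mul_eq_zero.mp hj).resolve_left hs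
        rw [hmv]
        simp only [hu1, map_zero, mul_zero, zero_add, hp, ht, zero_mul, zero_sub,
          Pi.smul_apply, smul_eq_mul, C_neg, C_mul]
        linear_combination (-(X 1 * (C ((A₂ *ᵥ x) j) : R))) * hinv
      · have h1 : v ⬝ᵥ (fun j => C (-(s⁻¹ * (A₂ *ᵥ x) j))) =
            ∑ j, (C (x j * -(s⁻¹ * (A₂ *ᵥ x) j)) : R) := by
          refine Finset.sum_congr rfl fun j _ => ?_
          rw [C_mul]
        rw [h1, ← _root_.map_sum]
        have h2 : ∑ j, x j * -(s⁻¹ * (A₂ *ᵥ x) j) = -s⁻¹ * (x ⬝ᵥ (A₂ *ᵥ x)) := by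
          rw [dotProduct, Finset.mul_sum]
          exact Finset.sum_congr rfl fun j _ => by ring
        rw [h2, hq2, mul_zero, map_zero]
    · have hinv : (C t : R) * C t⁻¹ = 1 := by
        rw [← C_mul, mul_inv_cancel₀ ht, C_1]
      refine ⟨fun j => C (t⁻¹ * (A₁ *ᵥ x) j), ?_, ?_⟩
      · funext j
        have hj := congrFun hst j
        simp only [Pi.add_apply, Pi.smul_apply, Pi.zero_apply, smul_eq_mul] at hj
        have hz : (A₂ *ᵥ x) j = -(t⁻¹ * s * (A₁ *ᵥ x) j) := by
          field_simp
          linear_combination hj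
        rw [hmv]
        simp only [hz, hp, Pi.smul_apply, smul_eq_mul, C_neg, C_mul]
        linear_combination (-(X 0 * (C ((A₁ *ᵥ x) j) : R))) * hinv
      · have h1 : v ⬝ᵥ (fun j => C (t⁻¹ * (A₁ *ᵥ x) j)) =
            ∑ j, (C (x j * (t⁻¹ * (A₁ *ᵥ x) j)) : R) := by
          refine Finset.sum_congr rfl fun j _ => ?_
          rw [C_mul]
        rw [h1, ← _root_.map_sum]
        have h2 : ∑ j, x j * (t⁻¹ * (A₁ *ᵥ x) j) = t⁻¹ * (x ⬝ᵥ (A₁ *ᵥ x)) := by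
          rw [dotProduct, Finset.mul_sum]
          exact Finset.sum_congr rfl fun j _ => by ring
        rw [h2, hq1, mul_zero, map_zero]
  obtain ⟨w, hw1, hw0⟩ := key
  have hvunit : IsUnit (v i) := by
    exact (isUnit_iff_ne_zero.mpr hxi).map (C : k →+* R)
  have hdvd : p * p ∣ pencilDet A₁ A₂ := by
    rw [← hdet]
    exact sq_dvd_det N v w p i hvunit hw1 (hvm.trans hw1) hw0
  have hunit : IsUnit p := hsf p hdvd
  have h0 : (eval ![s, t]) p = 0 := by
    simp [hp]
    ring
  have := hunit.map (eval ![s, t] : R →+* k)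
  rw [h0] at this
  exact not_isUnit_zero this
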